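/- Consistency of the difference-of-means plug-in estimator: suppose for each N the estimated latent outcomes satisfy max_i ‖L̂_i − L_i⁰(T_i)‖ → 0 in probability, the true potential outcomes L⁰(t) are i.i.d. with finite mean, T is i.i.d. Bernoulli(p) with 0 < p < 1 and independent of the potential outcomes. Then ψ̂_DM = (1/N₁)Σ_{i:Tᵢ=1}L̂_i − (1/N₀)Σ_{i:Tᵢ=0}L̂_i converges in probability to ψ = E[L⁰(1)] − E[L⁰(0)] as N → ∞. -/

import Mathlib

open MeasureTheory ProbabilityTheory Filter Finset
open scoped Topology

/-- Consistency of the difference-of-means plug-in estimator: if the learned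
latent outcomes are uniformly (over `i`) consistent for the true potential
outcomes at the observed treatment level, the `(L_i(0), L_i(1), T_i)` are
i.i.d. with `T_i ~ Bernoulli(p)`, `0 < p < 1`, independent of the potential
outcomes and the potential outcomes are integrable, then the
difference-of-means estimator converges in probability to
`ψ = E[L(1)] − E[L(0)]`. -/
theorem dm_estimator_consistent
    {Ω : Type*} [MeasurableSpace Ω] (P : Measure Ω) [IsProbabilityMeasure P]
    (L0 L1 : ℕ → Ω → ℝ) (T : ℕ → Ω → Bool) (p : ℝ) (hp0 : 0 < p) (hp1 : p < 1)
    (hmeas0 : ∀ i, Measurable (L0 i)) (hmeas1 : ∀ i, Measurable (L1 i))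
    (hmeasT : ∀ i, Measurable (T i))
    (hiid_indep : iIndepFun
      (fun i ω => (L0 i ω, L1 i ω, T i ω)) P)
    (hiid_ident : ∀ i, IdentDistrib (fun ω => (L0 i ω, L1 i ω, T i ω))
      (fun ω => (L0 0 ω, L1 0 ω, T 0 ω)) P P)
    (hbern : ∀ i, P {ω | T i ω = true} = ENNReal.ofReal p)
    (hTindep : ∀ i, IndepFun (T i) (fun ω => (L0 i ω, L1 i ω)) P)
    (hint0 : Integrable (L0 0) P) (hint1 : Integrable (L1 0) P)
    (Lhat : ℕ → ℕ → Ω → ℝ) (hmeashat : ∀ N i, Measurable (Lhat N i))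
    (hunif : ∀ ε : ℝ, 0 < ε →
      Tendsto (fun N => P {ω | ∃ i < N,
        ε ≤ |Lhat N i ω - (if T i ω then L1 i ω else L0 i ω)|})
        atTop (nhds 0))
    (ψhat : ℕ → Ω → ℝ)
    (hψhat : ∀ N ω, ψhat N ω =
      (∑ i ∈ Finset.range N, if T i ω then Lhat N i ω else 0) /
        (∑ i ∈ Finset.range N, if T i ω then (1 : ℝ) else 0) -
      (∑ i ∈ Finset.range N, if T i ω then 0 else Lhat N i ω) /
        (∑ i ∈ Finset.range N, if T i ω then 0 else (1 : ℝ))) :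
    ∀ ε : ℝ, 0 < ε →
      Tendsto (fun N =>
          P {ω | ε ≤ |ψhat N ω - ((∫ ω, L1 0 ω ∂P) - ∫ ω, L0 0 ω ∂P)|})
        atTop (nhds 0) := by
  classical
  have hp1' : (0:ℝ) < 1 - p := by linarith
  have hsetT : ∀ i, MeasurableSet {ω | T i ω = true} :=
    fun i => (hmeasT i) (measurableSet_singleton true)
  -- measurability of the coordinate maps on ℝ × ℝ × Bool
  have hbb : Measurable fun x : ℝ × ℝ × Bool => x.2.2 := measurable_snd.snd
  have hbset : MeasurableSet {x : ℝ × ℝ × Bool | x.2.2 = true} :=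
    hbb (measurableSet_singleton true)
  have hg1 : Measurable fun x : ℝ × ℝ × Bool => if x.2.2 then x.2.1 else 0 :=
    Measurable.ite hbset measurable_snd.fst measurable_const
  have hgB : Measurable fun x : ℝ × ℝ × Bool => if x.2.2 then (1:ℝ) else 0 :=
    Measurable.ite hbset measurable_const measurable_const
  have hg0 : Measurable fun x : ℝ × ℝ × Bool => if x.2.2 then (0:ℝ) else x.1 :=
    Measurable.ite hbset measurable_const measurable_fst
  have hgD : Measurable fun x : ℝ × ℝ × Bool => if x.2.2 then (0:ℝ) else 1 :=
    Measurable.ite hbset measurable_const measurable_const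
  -- measurability of the composed sequences
  have hmY1 : ∀ i, Measurable fun ω => if T i ω then L1 i ω else 0 :=
    fun i => Measurable.ite (hsetT i) (hmeas1 i) measurable_const
  have hmYB : ∀ i, Measurable fun ω => if T i ω then (1:ℝ) else 0 :=
    fun i => Measurable.ite (hsetT i) measurable_const measurable_const
  have hmY0 : ∀ i, Measurable fun ω => if T i ω then (0:ℝ) else L0 i ω :=
    fun i => Measurable.ite (hsetT i) measurable_const (hmeas0 i)
  have hmYD : ∀ i, Measurable fun ω => if T i ω then (0:ℝ) else 1 :=
    fun i => Measurable.ite (hsetT i) measurable_const measurable_const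
  -- integrability
  have hintY1 : Integrable (fun ω => if T 0 ω then L1 0 ω else 0) P :=
    hint1.mono (hmY1 0).aestronglyMeasurable
      (ae_of_all _ fun ω => by by_cases h : T 0 ω <;> simp [h])
  have hintYB : Integrable (fun ω => if T 0 ω then (1:ℝ) else 0) P :=
    (integrable_const (1:ℝ)).mono (hmYB 0).aestronglyMeasurable
      (ae_of_all _ fun ω => by by_cases h : T 0 ω <;> simp [h])
  have hintY0 : Integrable (fun ω => if T 0 ω then (0:ℝ) else L0 0 ω) P :=
    hint0.mono (hmY0 0).aestronglyMeasurable
      (ae_of_all _ fun ω => by by_cases h : T 0 ω <;> simp [h])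
  have hintYD : Integrable (fun ω => if T 0 ω then (0:ℝ) else 1) P :=
    (integrable_const (1:ℝ)).mono (hmYD 0).aestronglyMeasurable
      (ae_of_all _ fun ω => by by_cases h : T 0 ω <;> simp [h])
  -- Bernoulli integrals
  have hPTfalse : P {ω | T 0 ω = false} = ENNReal.ofReal (1 - p) := by
    have hc : {ω | T 0 ω = false} = {ω | T 0 ω = true}ᶜ := by
      ext ω; cases h : T 0 ω <;> simp [h]
    rw [hc, prob_compl_eq_one_sub (hsetT 0), hbern 0,
      ENNReal.ofReal_sub _ hp0.le, ENNReal.ofReal_one]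
  have hIB : ∫ ω, (if T 0 ω then (1:ℝ) else 0) ∂P = p := by
    have h1 : (fun ω => if T 0 ω then (1:ℝ) else 0)
        = fun ω => Set.indicator {ω | T 0 ω = true} (fun _ => (1:ℝ)) ω := by
      funext ω; by_cases h : T 0 ω <;> simp [Set.indicator, h]
    rw [h1, integral_indicator_const (1:ℝ) (hsetT 0), measureReal_def, hbern 0, smul_eq_mul, mul_one,
      ENNReal.toReal_ofReal hp0.le]
  have hID : ∫ ω, (if T 0 ω then (0:ℝ) else 1) ∂P = 1 - p := by
    have h1 : (fun ω => if T 0 ω then (0:ℝ) else 1)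
        = fun ω => Set.indicator {ω | T 0 ω = false} (fun _ => (1:ℝ)) ω := by
      funext ω; by_cases h : T 0 ω <;> simp [Set.indicator, h]
    have hsF : MeasurableSet {ω | T 0 ω = false} :=
      (hmeasT 0) (measurableSet_singleton false)
    rw [h1, integral_indicator_const (1:ℝ) hsF, measureReal_def, hPTfalse, smul_eq_mul, mul_one,
      ENNReal.toReal_ofReal hp1'.le]
  -- independence of the Bernoulli indicator from the potential outcomes
  have hbmeas : ∀ f : Bool → ℝ, Measurable f := fun f => measurable_of_countable f
  have hind1 : IndepFun (fun ω => if T 0 ω then (1:ℝ) else 0) (L1 0) P :=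
    (hTindep 0).comp (hbmeas fun t => if t then (1:ℝ) else 0)
      (measurable_snd : Measurable (Prod.snd : ℝ × ℝ → ℝ))
  have hind0 : IndepFun (fun ω => if T 0 ω then (0:ℝ) else 1) (L0 0) P :=
    (hTindep 0).comp (hbmeas fun t => if t then (0:ℝ) else 1)
      (measurable_fst : Measurable (Prod.fst : ℝ × ℝ → ℝ))
  have hE1 : ∫ ω, (if T 0 ω then L1 0 ω else 0) ∂P = p * ∫ ω, L1 0 ω ∂P := by
    have h2 : (fun ω => if T 0 ω then L1 0 ω else 0)
        = fun ω => (if T 0 ω then (1:ℝ) else 0) * L1 0 ω := by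
      funext ω; by_cases h : T 0 ω <;> simp [h]
    rw [show (∫ ω, (if T 0 ω then L1 0 ω else 0) ∂P)
        = ∫ ω, (if T 0 ω then (1:ℝ) else 0) * L1 0 ω ∂P from by rw [← h2],
      hind1.integral_fun_mul_eq_mul_integral (hmYB 0).aestronglyMeasurable hint1.1, hIB]
  have hE0 : ∫ ω, (if T 0 ω then (0:ℝ) else L0 0 ω) ∂P = (1 - p) * ∫ ω, L0 0 ω ∂P := by
    have h2 : (fun ω => if T 0 ω then (0:ℝ) else L0 0 ω)
        = fun ω => (if T 0 ω then (0:ℝ) else 1) * L0 0 ω := by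
      funext ω; by_cases h : T 0 ω <;> simp [h]
    rw [show (∫ ω, (if T 0 ω then (0:ℝ) else L0 0 ω) ∂P)
        = ∫ ω, (if T 0 ω then (0:ℝ) else 1) * L0 0 ω ∂P from by rw [← h2],
      hind0.integral_fun_mul_eq_mul_integral (hmYD 0).aestronglyMeasurable hint0.1, hID]
  -- strong laws of large numbers
  have hA : ∀ᵐ ω ∂P, Tendsto
      (fun n : ℕ => (∑ i ∈ range n, if T i ω then L1 i ω else 0) / n) atTop
      (𝓝 (p * ∫ ω, L1 0 ω ∂P)) := by
    have h := strong_law_ae_real (fun i ω => if T i ω then L1 i ω else 0) hintY1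
      (fun i j hij => (hiid_indep.indepFun hij).comp hg1 hg1)
      (fun i => (hiid_ident i).comp hg1)
    simpa only [hE1] using h
  have hBe : ∀ᵐ ω ∂P, Tendsto
      (fun n : ℕ => (∑ i ∈ range n, if T i ω then (1:ℝ) else 0) / n) atTop (𝓝 p) := by
    have h := strong_law_ae_real (fun i ω => if T i ω then (1:ℝ) else 0) hintYB
      (fun i j hij => (hiid_indep.indepFun hij).comp hgB hgB)
      (fun i => (hiid_ident i).comp hgB)
    simpa only [hIB] using h
  have hC : ∀ᵐ ω ∂P, Tendsto
      (fun n : ℕ => (∑ i ∈ range n, if T i ω then (0:ℝ) else L0 i ω) / n) atTop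
      (𝓝 ((1 - p) * ∫ ω, L0 0 ω ∂P)) := by
    have h := strong_law_ae_real (fun i ω => if T i ω then (0:ℝ) else L0 i ω) hintY0
      (fun i j hij => (hiid_indep.indepFun hij).comp hg0 hg0)
      (fun i => (hiid_ident i).comp hg0)
    simpa only [hE0] using h
  have hDe : ∀ᵐ ω ∂P, Tendsto
      (fun n : ℕ => (∑ i ∈ range n, if T i ω then (0:ℝ) else 1) / n) atTop (𝓝 (1 - p)) := by
    have h := strong_law_ae_real (fun i ω => if T i ω then (0:ℝ) else 1) hintYD
      (fun i j hij => (hiid_indep.indepFun hij).comp hgD hgD)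
      (fun i => (hiid_ident i).comp hgD)
    simpa only [hID] using h
  -- almost sure convergence of the oracle difference-of-means estimator
  have hψtrue_ae : ∀ᵐ ω ∂P, Tendsto (fun n : ℕ =>
      (∑ i ∈ range n, if T i ω then L1 i ω else 0) /
        (∑ i ∈ range n, if T i ω then (1:ℝ) else 0) -
      (∑ i ∈ range n, if T i ω then (0:ℝ) else L0 i ω) /
        (∑ i ∈ range n, if T i ω then (0:ℝ) else 1)) atTop
      (𝓝 ((∫ ω, L1 0 ω ∂P) - ∫ ω, L0 0 ω ∂P)) := by
    filter_upwards [hA, hBe, hC, hDe] with ω h1 h2 h3 h4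
    have e1 : Tendsto (fun n : ℕ =>
        (∑ i ∈ range n, if T i ω then L1 i ω else 0) /
          (∑ i ∈ range n, if T i ω then (1:ℝ) else 0)) atTop (𝓝 (∫ ω, L1 0 ω ∂P)) := by
      have h := h1.div h2 (ne_of_gt hp0)
      rw [mul_div_cancel_left₀ _ (ne_of_gt hp0)] at h
      refine h.congr' ?_
      filter_upwards [eventually_ge_atTop 1] with n hn
      have hn' : (n:ℝ) ≠ 0 := by
        have : (0:ℝ) < n := by exact_mod_cast Nat.lt_of_lt_of_le Nat.zero_lt_one hn
        exact ne_of_gt this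
      exact div_div_div_cancel_right₀ hn' _ _
    have e0 : Tendsto (fun n : ℕ =>
        (∑ i ∈ range n, if T i ω then (0:ℝ) else L0 i ω) /
          (∑ i ∈ range n, if T i ω then (0:ℝ) else 1)) atTop (𝓝 (∫ ω, L0 0 ω ∂P)) := by
      have h := h3.div h4 (ne_of_gt hp1')
      rw [mul_div_cancel_left₀ _ (ne_of_gt hp1')] at h
      refine h.congr' ?_
      filter_upwards [eventually_ge_atTop 1] with n hn
      have hn' : (n:ℝ) ≠ 0 := by
        have : (0:ℝ) < n := by exact_mod_cast Nat.lt_of_lt_of_le Nat.zero_lt_one hn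
        exact ne_of_gt this
      exact div_div_div_cancel_right₀ hn' _ _
    exact e1.sub e0
  -- convergence in measure of the oracle estimator and of the sample fractions
  have hmeasψtrue : ∀ n : ℕ, Measurable (fun ω =>
      (∑ i ∈ range n, if T i ω then L1 i ω else 0) /
        (∑ i ∈ range n, if T i ω then (1:ℝ) else 0) -
      (∑ i ∈ range n, if T i ω then (0:ℝ) else L0 i ω) /
        (∑ i ∈ range n, if T i ω then (0:ℝ) else 1)) := fun n =>
    ((Finset.measurable_sum _ fun i _ => hmY1 i).div
      (Finset.measurable_sum _ fun i _ => hmYB i)).sub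
    ((Finset.measurable_sum _ fun i _ => hmY0 i).div
      (Finset.measurable_sum _ fun i _ => hmYD i))
  have hTIM : TendstoInMeasure P (fun n ω =>
      (∑ i ∈ range n, if T i ω then L1 i ω else 0) /
        (∑ i ∈ range n, if T i ω then (1:ℝ) else 0) -
      (∑ i ∈ range n, if T i ω then (0:ℝ) else L0 i ω) /
        (∑ i ∈ range n, if T i ω then (0:ℝ) else 1)) atTop
      (fun _ => (∫ ω, L1 0 ω ∂P) - ∫ ω, L0 0 ω ∂P) :=
    tendstoInMeasure_of_tendsto_ae (fun n => (hmeasψtrue n).aestronglyMeasurable) hψtrue_ae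
  have hTIMB : TendstoInMeasure P (fun n ω =>
      (∑ i ∈ range n, if T i ω then (1:ℝ) else 0) / n) atTop (fun _ => p) :=
    tendstoInMeasure_of_tendsto_ae (fun n =>
      ((Finset.measurable_sum _ fun i _ => hmYB i).div measurable_const).aestronglyMeasurable) hBe
  have hTIMD : TendstoInMeasure P (fun n ω =>
      (∑ i ∈ range n, if T i ω then (0:ℝ) else 1) / n) atTop (fun _ => (1 - p)) :=
    tendstoInMeasure_of_tendsto_ae (fun n =>
      ((Finset.measurable_sum _ fun i _ => hmYD i).div measurable_const).aestronglyMeasurable) hDe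
  -- final argument
  intro ε hε
  have h4 := tendstoInMeasure_iff_dist.mp hTIM (ε/2) (by positivity)
  have h1' := hunif (ε/4) (by positivity)
  have h2' := tendstoInMeasure_iff_dist.mp hTIMB p hp0
  have h3' := tendstoInMeasure_iff_dist.mp hTIMD (1 - p) hp1'
  have key : ∀ N : ℕ,
      P {ω | ε ≤ |ψhat N ω - ((∫ ω, L1 0 ω ∂P) - ∫ ω, L0 0 ω ∂P)|} ≤
      P {ω | ε/2 ≤ dist
          ((∑ i ∈ range N, if T i ω then L1 i ω else 0) /
            (∑ i ∈ range N, if T i ω then (1:ℝ) else 0) -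
          (∑ i ∈ range N, if T i ω then (0:ℝ) else L0 i ω) /
            (∑ i ∈ range N, if T i ω then (0:ℝ) else 1))
          ((∫ ω, L1 0 ω ∂P) - ∫ ω, L0 0 ω ∂P)} +
      (P {ω | ∃ i < N, ε/4 ≤ |Lhat N i ω - (if T i ω then L1 i ω else L0 i ω)|} +
      (P {ω | p ≤ dist ((∑ i ∈ range N, if T i ω then (1:ℝ) else 0) / N) p} +
       P {ω | 1 - p ≤ dist ((∑ i ∈ range N, if T i ω then (0:ℝ) else 1) / N) (1 - p)})) := by
    intro N
    refine le_trans (measure_mono ?_) (le_trans (measure_union_le _ _)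
      (add_le_add_right (le_trans (measure_union_le _ _)
        (add_le_add_right (measure_union_le _ _) _)) _))
    intro ω hω
    by_contra hcon
    simp only [Set.mem_union, not_or] at hcon
    obtain ⟨h4n, h1n, h2n, h3n⟩ := hcon
    simp only [Set.mem_setOf_eq, not_le] at h4n h2n h3n
    simp only [Set.mem_setOf_eq] at h1n
    push_neg at h1n
    have herr : ∀ i < N, |Lhat N i ω - (if T i ω then L1 i ω else L0 i ω)| < ε/4 := h1n
    -- positivity of the group counts
    have hBnn : (0:ℝ) ≤ ∑ i ∈ range N, if T i ω then (1:ℝ) else 0 :=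
      Finset.sum_nonneg fun i _ => by by_cases h : T i ω <;> simp [h]
    have hBne : (∑ i ∈ range N, if T i ω then (1:ℝ) else 0) ≠ 0 := by
      intro h0
      have : p ≤ dist ((∑ i ∈ range N, if T i ω then (1:ℝ) else 0) / N) p := by
        rw [h0, zero_div, Real.dist_eq, zero_sub, abs_neg, abs_of_pos hp0]
      exact absurd this (not_le.mpr h2n)
    have hBpos : (0:ℝ) < ∑ i ∈ range N, if T i ω then (1:ℝ) else 0 :=
      lt_of_le_of_ne hBnn (Ne.symm hBne)
    have hDnn : (0:ℝ) ≤ ∑ i ∈ range N, if T i ω then (0:ℝ) else 1 :=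
      Finset.sum_nonneg fun i _ => by by_cases h : T i ω <;> simp [h]
    have hDne : (∑ i ∈ range N, if T i ω then (0:ℝ) else 1) ≠ 0 := by
      intro h0
      have : 1 - p ≤ dist ((∑ i ∈ range N, if T i ω then (0:ℝ) else 1) / N) (1 - p) := by
        rw [h0, zero_div, Real.dist_eq, zero_sub, abs_neg, abs_of_pos hp1']
      exact absurd this (not_le.mpr h3n)
    have hDpos : (0:ℝ) < ∑ i ∈ range N, if T i ω then (0:ℝ) else 1 :=
      lt_of_le_of_ne hDnn (Ne.symm hDne)
    -- the error bounds on each group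
    have hA'A : |(∑ i ∈ range N, if T i ω then Lhat N i ω else 0) -
        (∑ i ∈ range N, if T i ω then L1 i ω else 0)| ≤
        ε/4 * ∑ i ∈ range N, if T i ω then (1:ℝ) else 0 := by
      rw [← Finset.sum_sub_distrib]
      refine le_trans (Finset.abs_sum_le_sum_abs _ _) ?_
      rw [Finset.mul_sum]
      refine Finset.sum_le_sum fun i hi => ?_
      by_cases h : T i ω
      · have := herr i (Finset.mem_range.mp hi)
        rw [if_pos h] at this
        simpa [h] using this.le
      · simp [h]
    have hC'C : |(∑ i ∈ range N, if T i ω then (0:ℝ) else Lhat N i ω) -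
        (∑ i ∈ range N, if T i ω then (0:ℝ) else L0 i ω)| ≤
        ε/4 * ∑ i ∈ range N, if T i ω then (0:ℝ) else 1 := by
      rw [← Finset.sum_sub_distrib]
      refine le_trans (Finset.abs_sum_le_sum_abs _ _) ?_
      rw [Finset.mul_sum]
      refine Finset.sum_le_sum fun i hi => ?_
      by_cases h : T i ω
      · simp [h]
      · have := herr i (Finset.mem_range.mp hi)
        rw [if_neg h] at this
        simpa [h] using this.le
    -- combine
    set A := ∑ i ∈ range N, if T i ω then L1 i ω else 0 with hAdef
    set B := ∑ i ∈ range N, if T i ω then (1:ℝ) else 0 with hBdef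
    set C := ∑ i ∈ range N, if T i ω then (0:ℝ) else L0 i ω with hCdef
    set D := ∑ i ∈ range N, if T i ω then (0:ℝ) else 1 with hDdef
    set A' := ∑ i ∈ range N, if T i ω then Lhat N i ω else 0 with hA'def
    set C' := ∑ i ∈ range N, if T i ω then (0:ℝ) else Lhat N i ω with hC'def
    have hsplit : ψhat N ω - (A / B - C / D) = (A' - A) / B - (C' - C) / D := by
      rw [hψhat N ω, sub_div, sub_div]
      ring
    have hterm1 : |(A' - A) / B| ≤ ε/4 := by
      rw [abs_div, abs_of_pos hBpos, div_le_iff₀ hBpos]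
      exact hA'A
    have hterm2 : |(C' - C) / D| ≤ ε/4 := by
      rw [abs_div, abs_of_pos hDpos, div_le_iff₀ hDpos]
      exact hC'C
    have hdiff : |ψhat N ω - (A / B - C / D)| ≤ ε/2 := by
      rw [hsplit]
      calc |(A' - A) / B - (C' - C) / D| ≤ |(A' - A) / B| + |(C' - C) / D| := abs_sub _ _
        _ ≤ ε/4 + ε/4 := add_le_add hterm1 hterm2
        _ = ε/2 := by ring
    have htrue : |(A / B - C / D) - ((∫ ω, L1 0 ω ∂P) - ∫ ω, L0 0 ω ∂P)| < ε/2 := by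
      have := h4n
      rw [Real.dist_eq] at this
      exact this
    have hωε : ε ≤ |ψhat N ω - ((∫ ω, L1 0 ω ∂P) - ∫ ω, L0 0 ω ∂P)| := hω
    have htri : |ψhat N ω - ((∫ ω, L1 0 ω ∂P) - ∫ ω, L0 0 ω ∂P)| ≤
        |ψhat N ω - (A / B - C / D)| +
        |(A / B - C / D) - ((∫ ω, L1 0 ω ∂P) - ∫ ω, L0 0 ω ∂P)| := abs_sub_le _ _ _
    linarith
  have hsum : Tendsto (fun N =>
      P {ω | ε/2 ≤ dist
          ((∑ i ∈ range N, if T i ω then L1 i ω else 0) /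
            (∑ i ∈ range N, if T i ω then (1:ℝ) else 0) -
          (∑ i ∈ range N, if T i ω then (0:ℝ) else L0 i ω) /
            (∑ i ∈ range N, if T i ω then (0:ℝ) else 1))
          ((∫ ω, L1 0 ω ∂P) - ∫ ω, L0 0 ω ∂P)} +
      (P {ω | ∃ i < N, ε/4 ≤ |Lhat N i ω - (if T i ω then L1 i ω else L0 i ω)|} +
      (P {ω | p ≤ dist ((∑ i ∈ range N, if T i ω then (1:ℝ) else 0) / N) p} +
       P {ω | 1 - p ≤ dist ((∑ i ∈ range N, if T i ω then (0:ℝ) else 1) / N) (1 - p)})))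
      atTop (𝓝 0) := by
    have h := h4.add (h1'.add (h2'.add h3'))
    simpa using h
  exact tendsto_of_tendsto_of_tendsto_of_le_of_le tendsto_const_nhds hsum
    (fun N => zero_le) key
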